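/- Let f_1 : M_1 → M_2 and f_2 : M_2 → M_3 be smooth maps between smooth manifolds and S ⊆ M_3 an embedded submanifold with f_2 transverse to S. Then f_1 is transverse to the submanifold f_2^{-1}(S) ⊆ M_2 if and only if the composite f_2 ∘ f_1 is transverse to S. -/

import Mathlib

open scoped Manifold

/-!
STATEMENT 16.  Let f₁ : M₁ → M₂, f₂ : M₂ → M₃ be smooth maps and S ⊆ M₃ an
embedded submanifold with f₂ ⋔ S.  Then f₁ ⋔ f₂⁻¹(S) iff f₂ ∘ f₁ ⋔ S.

Encoding with Mathlib manifolds: the submanifold S is recorded by its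
underlying set together with its tangent spaces TS y ⊆ T_y M₃;
transversality of f to (S, TS) means range(df_x) + T_{f(x)}S = T_{f(x)}M₃
whenever f(x) ∈ S.  When f₂ ⋔ S, the tangent space of the embedded
submanifold f₂⁻¹(S) at y is (df₂)_y⁻¹(T_{f₂(y)}S).
-/
lemma aux_transversality {U V W : Type*} [AddCommGroup U] [Module ℝ U]
    [AddCommGroup V] [Module ℝ V] [AddCommGroup W] [Module ℝ W]
    (f : U →ₗ[ℝ] V) (g : V →ₗ[ℝ] W) (T : Submodule ℝ W)
    (h : LinearMap.range g ⊔ T = ⊤) :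
    (LinearMap.range f ⊔ T.comap g = ⊤) ↔ (LinearMap.range (g.comp f) ⊔ T = ⊤) := by
  constructor
  · intro h1
    rw [eq_top_iff]
    intro w _
    obtain ⟨_, ⟨v, rfl⟩, t, ht, rfl⟩ := Submodule.mem_sup.1 (h ▸ Submodule.mem_top (x := w))
    obtain ⟨_, ⟨u, rfl⟩, v', hv', rfl⟩ := Submodule.mem_sup.1 (h1 ▸ Submodule.mem_top (x := v))
    refine Submodule.mem_sup.2 ⟨g (f u), ⟨u, rfl⟩, g v' + t, T.add_mem hv' ht, ?_⟩
    rw [map_add]; abel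
  · intro h1
    rw [eq_top_iff]
    intro v _
    obtain ⟨_, ⟨u, rfl⟩, t, ht, hgv⟩ := Submodule.mem_sup.1 (h1 ▸ Submodule.mem_top (x := g v))
    refine Submodule.mem_sup.2 ⟨f u, ⟨u, rfl⟩, v - f u, ?_, by abel⟩
    show g (v - f u) ∈ T
    rw [map_sub]
    have : g (f u) = g v - t := eq_sub_iff_add_eq.2 hgv
    rw [this]
    simpa using ht

theorem transversality_of_composition
    {E1 E2 E3 : Type*}
    [NormedAddCommGroup E1] [NormedSpace ℝ E1]
    [NormedAddCommGroup E2] [NormedSpace ℝ E2]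
    [NormedAddCommGroup E3] [NormedSpace ℝ E3]
    {H1 H2 H3 : Type*}
    [TopologicalSpace H1] [TopologicalSpace H2] [TopologicalSpace H3]
    (I1 : ModelWithCorners ℝ E1 H1) (I2 : ModelWithCorners ℝ E2 H2)
    (I3 : ModelWithCorners ℝ E3 H3)
    {M1 M2 M3 : Type*}
    [TopologicalSpace M1] [ChartedSpace H1 M1] [IsManifold I1 (⊤ : ℕ∞) M1]
    [TopologicalSpace M2] [ChartedSpace H2 M2] [IsManifold I2 (⊤ : ℕ∞) M2]
    [TopologicalSpace M3] [ChartedSpace H3 M3] [IsManifold I3 (⊤ : ℕ∞) M3]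
    (f1 : M1 → M2) (f2 : M2 → M3)
    (hf1 : MDifferentiable I1 I2 f1) (hf2 : MDifferentiable I2 I3 f2)
    -- the embedded submanifold S of M₃, with its tangent spaces
    (S : Set M3)
    (TS : ∀ y : M3, Submodule ℝ (TangentSpace I3 y))
    -- f₂ is transverse to S
    (hf2S : ∀ y : M2, f2 y ∈ S →
      LinearMap.range ((mfderiv I2 I3 f2 y) :
        TangentSpace I2 y →ₗ[ℝ] TangentSpace I3 (f2 y)) ⊔ TS (f2 y) = ⊤) :
    -- f₁ ⋔ f₂⁻¹(S)  ↔  (f₂ ∘ f₁) ⋔ S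
    ((∀ x : M1, f1 x ∈ f2 ⁻¹' S →
        LinearMap.range ((mfderiv I1 I2 f1 x) :
            TangentSpace I1 x →ₗ[ℝ] TangentSpace I2 (f1 x))
          ⊔ Submodule.comap
              ((mfderiv I2 I3 f2 (f1 x)) :
                TangentSpace I2 (f1 x) →ₗ[ℝ] TangentSpace I3 (f2 (f1 x)))
              (TS (f2 (f1 x))) = ⊤)
      ↔ (∀ x : M1, (f2 ∘ f1) x ∈ S →
          LinearMap.range ((mfderiv I1 I3 (f2 ∘ f1) x) :
            TangentSpace I1 x →ₗ[ℝ] TangentSpace I3 ((f2 ∘ f1) x)) ⊔ TS ((f2 ∘ f1) x) = ⊤)) := by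
  have key : ∀ x : M1, mfderiv I1 I3 (f2 ∘ f1) x =
      (mfderiv I2 I3 f2 (f1 x)).comp (mfderiv I1 I2 f1 x) := fun x =>
    mfderiv_comp x (hf2 (f1 x)) (hf1 x)
  refine forall_congr' fun x => ?_
  have main : ∀ hx : f2 (f1 x) ∈ S,
      (LinearMap.range ((mfderiv I1 I2 f1 x) :
            TangentSpace I1 x →ₗ[ℝ] TangentSpace I2 (f1 x))
          ⊔ Submodule.comap
              ((mfderiv I2 I3 f2 (f1 x)) :
                TangentSpace I2 (f1 x) →ₗ[ℝ] TangentSpace I3 (f2 (f1 x)))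
              (TS (f2 (f1 x))) = ⊤)
        ↔ (LinearMap.range ((mfderiv I1 I3 (f2 ∘ f1) x) :
            TangentSpace I1 x →ₗ[ℝ] TangentSpace I3 ((f2 ∘ f1) x)) ⊔ TS ((f2 ∘ f1) x) = ⊤) := by
    intro hx
    have := aux_transversality
      ((mfderiv I1 I2 f1 x) : TangentSpace I1 x →ₗ[ℝ] TangentSpace I2 (f1 x))
      ((mfderiv I2 I3 f2 (f1 x)) : TangentSpace I2 (f1 x) →ₗ[ℝ] TangentSpace I3 (f2 (f1 x)))
      (TS (f2 (f1 x))) (hf2S (f1 x) hx)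
    rw [key x]
    simpa using this
  exact ⟨fun h hx => (main hx).1 (h hx), fun h hx => (main hx).2 (h hx)⟩
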